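/- For l ≥ 3, let T be the real symmetric tridiagonal l×l matrix with T i i = 2 for all i, T 1 2 = T 2 1 = −√2, T (l−1) l = T l (l−1) = −√2, T i (i+1) = T (i+1) i = −1 for 2 ≤ i ≤ l−2, and all other entries 0. Then the leading principal minor of T of order i equals 2 for 2 ≤ i ≤ l−1 and det T = 0; in particular T is not positive definite. -/
import Mathlib

open Matrix Finset

noncomputable def Lmat (n : ℕ) : Matrix (Fin n) (Fin n) ℝ := fun i j =>
  if i = j then 1
  else if i.val = 1 ∧ j.val = 0 then -(Real.sqrt 2) / 2
  else if j.val + 1 = i.val ∧ 1 ≤ j.val then -1 else 0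

noncomputable def Umat (n : ℕ) : Matrix (Fin n) (Fin n) ℝ := fun i j =>
  if i = j then (if i.val = 0 then 2 else 1)
  else if i.val = 0 ∧ j.val = 1 then -(Real.sqrt 2)
  else if i.val + 1 = j.val ∧ 1 ≤ i.val then -1 else 0

noncomputable def Mmat (n : ℕ) : Matrix (Fin n) (Fin n) ℝ := fun i j =>
  if i = j then 2
  else if (i.val = 0 ∧ j.val = 1) ∨ (j.val = 0 ∧ i.val = 1) then -(Real.sqrt 2)
  else if i.val + 1 = j.val ∨ j.val + 1 = i.val then -1 else 0

lemma sum_two' {n : ℕ} (f : Fin n → ℝ) (a b : Fin n) (hab : a ≠ b)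
    (h : ∀ k, k ≠ a → k ≠ b → f k = 0) : ∑ k, f k = f a + f b := by
  have : ∑ k, f k = ∑ k ∈ ({a, b} : Finset (Fin n)), f k := by
    refine (Finset.sum_subset (Finset.subset_univ _) ?_).symm
    intro k _ hk
    simp only [Finset.mem_insert, Finset.mem_singleton, not_or] at hk
    exact h k hk.1 hk.2
  rw [this, Finset.sum_insert (by simpa using hab), Finset.sum_singleton]

lemma s2 : Real.sqrt 2 * Real.sqrt 2 = 2 := Real.mul_self_sqrt (by norm_num)

set_option maxHeartbeats 2000000 in
lemma LU_eq (n : ℕ) : Lmat n * Umat n = Mmat n := by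
  ext i j
  rw [Matrix.mul_apply]
  by_cases hi : i.val = 0
  · have hz : ∀ k : Fin n, k ≠ i → Lmat n i k * Umat n k j = 0 := by
      intro k hk
      have h1 : k.val ≠ i.val := fun h => hk (Fin.ext h)
      simp only [Lmat, Fin.ext_iff]
      split_ifs <;> first | (exfalso; omega) | exact zero_mul _
    rw [Finset.sum_eq_single_of_mem i (Finset.mem_univ i) (fun k _ hk => hz k hk)]
    simp only [Lmat, Umat, Mmat, Fin.ext_iff]
    split_ifs <;> first | (exfalso; omega) | ring
  · have hi1 : 1 ≤ i.val := by omega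
    set k0 : Fin n := ⟨i.val - 1, by omega⟩ with hk0
    have hk0v : k0.val + 1 = i.val := by simp only [hk0]; omega
    have hk0i : k0 ≠ i := by
      intro h; have := congrArg Fin.val h; omega
    have hzero : ∀ k : Fin n, k ≠ i → k ≠ k0 → Lmat n i k * Umat n k j = 0 := by
      intro k hk hk'
      have h1 : k.val ≠ i.val := fun h => hk (Fin.ext h)
      have h2 : k.val ≠ k0.val := fun h => hk' (Fin.ext h)
      simp only [Lmat, Fin.ext_iff]
      split_ifs <;> first | (exfalso; omega) | exact zero_mul _
    rw [sum_two' _ i k0 (Ne.symm hk0i) hzero]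
    simp only [Lmat, Umat, Mmat, Fin.ext_iff]
    split_ifs <;> first | (exfalso; omega) | ring1 | linear_combination s2 | linear_combination s2 / 2

lemma detMmat (n : ℕ) (hn : 0 < n) : (Mmat n).det = 2 := by
  rw [← LU_eq n, Matrix.det_mul]
  have hL : (Lmat n).det = 1 := by
    rw [Matrix.det_of_lowerTriangular]
    · exact Finset.prod_eq_one (fun i _ => by simp [Lmat])
    · intro i j hij
      have : i.val < j.val := hij
      simp only [Lmat, Fin.ext_iff]
      split_ifs <;> first | (exfalso; omega) | rfl
  have hU : (Umat n).det = 2 := by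
    rw [Matrix.det_of_upperTriangular]
    · rw [Finset.prod_eq_single_of_mem ⟨0, hn⟩ (Finset.mem_univ _)]
      · simp [Umat]
      · intro b _ hb
        have : b.val ≠ 0 := fun h => hb (Fin.ext h)
        simp [Umat, this]
    · intro i j hij
      have : j.val < i.val := hij
      simp only [Umat, Fin.ext_iff]
      split_ifs <;> first | (exfalso; omega) | rfl
  rw [hL, hU, one_mul]

lemma sum_three' {n : ℕ} (f : Fin n → ℝ) (a b c : Fin n) (hab : a ≠ b) (hac : a ≠ c)
    (hbc : b ≠ c) (h : ∀ k, k ≠ a → k ≠ b → k ≠ c → f k = 0) :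
    ∑ k, f k = f a + f b + f c := by
  have : ∑ k, f k = ∑ k ∈ ({a, b, c} : Finset (Fin n)), f k := by
    refine (Finset.sum_subset (Finset.subset_univ _) ?_).symm
    intro k _ hk
    simp only [Finset.mem_insert, Finset.mem_singleton, not_or] at hk
    exact h k hk.1 hk.2.1 hk.2.2
  rw [this, Finset.sum_insert (by simp [hab, hac]),
    Finset.sum_insert (by simpa using hbc), Finset.sum_singleton, add_assoc]

theorem stmt9 {l : ℕ} (hl : 3 ≤ l) (T : Matrix (Fin l) (Fin l) ℝ)
    (hT : ∀ i j : Fin l, T i j =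
      if i = j then 2
      else if (i.val = 0 ∧ j.val = 1) ∨ (j.val = 0 ∧ i.val = 1) ∨
              (i.val + 1 = j.val ∧ j.val = l - 1) ∨
              (j.val + 1 = i.val ∧ i.val = l - 1) then -Real.sqrt 2
      else if i.val + 1 = j.val ∨ j.val + 1 = i.val then -1
      else 0) :
    (∀ i : ℕ, ∀ _ : 2 ≤ i, ∀ hil : i ≤ l - 1,
      (T.submatrix (Fin.castLE (le_trans hil (Nat.sub_le l 1)))
        (Fin.castLE (le_trans hil (Nat.sub_le l 1)))).det = 2) ∧
    T.det = 0 ∧ ¬ T.PosDef := by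
  set v : Fin l → ℝ := fun k => if k.val = 0 ∨ k.val = l - 1 then 1 else Real.sqrt 2 with hv
  have hvne : v ≠ 0 := by
    intro h
    have := congrFun h ⟨0, by omega⟩
    simp [hv] at this
  have hvval : ∀ k : Fin l, v k = if k.val = 0 ∨ k.val = l - 1 then 1 else Real.sqrt 2 :=
    fun k => rfl
  have hmul : T *ᵥ v = 0 := by
    funext i
    rw [Matrix.mulVec, dotProduct]
    simp only [Pi.zero_apply]
    have hTii : T i i = 2 := by rw [hT, if_pos rfl]
    by_cases hi0 : i.val = 0
    · set j1 : Fin l := ⟨1, by omega⟩ with hj1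
      have hj1v : (j1 : ℕ) = 1 := rfl
      have hij1 : i ≠ j1 := fun h => by rw [h, hj1v] at hi0; exact absurd hi0 one_ne_zero
      have hz : ∀ k : Fin l, k ≠ i → k ≠ j1 → T i k * v k = 0 := by
        intro k hk hk'
        have h1 : k.val ≠ i.val := fun h => hk (Fin.ext h)
        have h2 : k.val ≠ 1 := fun h => hk' (Fin.ext (h.trans hj1v.symm))
        rw [hT, if_neg (fun h => h1 (congrArg Fin.val h).symm),
          if_neg (by push_neg; omega), if_neg (by push_neg; omega), zero_mul]
      rw [sum_two' _ i j1 hij1 hz]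
      have hvi : v i = 1 := by rw [hvval, if_pos (Or.inl hi0)]
      have hTij1 : T i j1 = -Real.sqrt 2 := by
        rw [hT, if_neg hij1, if_pos (Or.inl ⟨hi0, hj1v⟩)]
      have hvj1 : v j1 = Real.sqrt 2 := by
        rw [hvval, if_neg (by rw [hj1v]; push_neg; omega)]
      rw [hTii, hvi, hTij1, hvj1]
      linear_combination -s2
    · by_cases hil1 : i.val = l - 1
      · set j0 : Fin l := ⟨l - 2, by omega⟩ with hj0
        have hj0v : (j0 : ℕ) = l - 2 := rfl
        have hij0 : i ≠ j0 := fun h => by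
          rw [h, hj0v] at hil1; omega
        have hz : ∀ k : Fin l, k ≠ j0 → k ≠ i → T i k * v k = 0 := by
          intro k hk' hk
          have h1 : k.val ≠ i.val := fun h => hk (Fin.ext h)
          have h2 : k.val ≠ l - 2 := fun h => hk' (Fin.ext (h.trans hj0v.symm))
          rw [hT, if_neg (fun h => h1 (congrArg Fin.val h).symm),
            if_neg (by push_neg; omega), if_neg (by push_neg; omega), zero_mul]
        rw [sum_two' _ j0 i (fun h => hij0 h.symm) hz]
        have hvi : v i = 1 := by rw [hvval, if_pos (Or.inr hil1)]
        have hTij0 : T i j0 = -Real.sqrt 2 := by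
          rw [hT, if_neg hij0,
            if_pos (Or.inr (Or.inr (Or.inr ⟨by rw [hj0v]; omega, hil1⟩)))]
        have hvj0 : v j0 = Real.sqrt 2 := by
          rw [hvval, if_neg (by rw [hj0v]; push_neg; omega)]
        rw [hTii, hvi, hTij0, hvj0]
        linear_combination -s2
      · have hi1 : 1 ≤ i.val := by omega
        have hi2 : i.val ≤ l - 2 := by omega
        set a : Fin l := ⟨i.val - 1, by omega⟩ with ha
        set b : Fin l := ⟨i.val + 1, by omega⟩ with hb
        have hav : (a : ℕ) = i.val - 1 := rfl
        have hbv : (b : ℕ) = i.val + 1 := rfl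
        have hai : a ≠ i := fun h => by rw [← h, hav] at hi1; omega
        have hab : a ≠ b := fun h => by
          have := congrArg Fin.val h; rw [hav, hbv] at this; omega
        have hib : i ≠ b := fun h => by
          have := congrArg Fin.val h; rw [hbv] at this; omega
        have hz : ∀ k : Fin l, k ≠ a → k ≠ i → k ≠ b → T i k * v k = 0 := by
          intro k hk1 hk2 hk3
          have h1 : k.val ≠ i.val - 1 := fun h => hk1 (Fin.ext (h.trans hav.symm))
          have h2 : k.val ≠ i.val := fun h => hk2 (Fin.ext h)
          have h3 : k.val ≠ i.val + 1 := fun h => hk3 (Fin.ext (h.trans hbv.symm))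
          rw [hT, if_neg (fun h => h2 (congrArg Fin.val h).symm),
            if_neg (by push_neg; omega), if_neg (by push_neg; omega), zero_mul]
        rw [sum_three' _ a i b hai hab hib hz]
        have hvi : v i = Real.sqrt 2 := by rw [hvval, if_neg (by push_neg; omega)]
        have h1 : T i a * v a = -Real.sqrt 2 := by
          by_cases hI : i.val = 1
          · have hTia : T i a = -Real.sqrt 2 := by
              rw [hT, if_neg (fun h => hai h.symm),
                if_pos (Or.inr (Or.inl ⟨by rw [hav]; omega, hI⟩))]
            have hva : v a = 1 := by rw [hvval, if_pos (Or.inl (by rw [hav]; omega))]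
            rw [hTia, hva, mul_one]
          · have hTia : T i a = -1 := by
              rw [hT, if_neg (fun h => hai h.symm),
                if_neg (by push_neg; rw [hav]; omega), if_pos (Or.inr (by rw [hav]; omega))]
            have hva : v a = Real.sqrt 2 := by
              rw [hvval, if_neg (by rw [hav]; push_neg; omega)]
            rw [hTia, hva]; ring
        have h3 : T i b * v b = -Real.sqrt 2 := by
          by_cases hI : i.val + 1 = l - 1
          · have hTib : T i b = -Real.sqrt 2 := by
              rw [hT, if_neg hib,
                if_pos (Or.inr (Or.inr (Or.inl ⟨by rw [hbv], by rw [hbv]; omega⟩)))]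
            have hvb : v b = 1 := by rw [hvval, if_pos (Or.inr (by rw [hbv]; omega))]
            rw [hTib, hvb, mul_one]
          · have hTib : T i b = -1 := by
              rw [hT, if_neg hib,
                if_neg (by push_neg; rw [hbv]; omega), if_pos (Or.inl (by rw [hbv]))]
            have hvb : v b = Real.sqrt 2 := by
              rw [hvval, if_neg (by rw [hbv]; push_neg; omega)]
            rw [hTib, hvb]; ring
        rw [h1, h3, hTii, hvi]
        ring
  have hdet : T.det = 0 := by
    rw [← Matrix.exists_mulVec_eq_zero_iff]
    exact ⟨v, hvne, hmul⟩
  refine ⟨?_, hdet, ?_⟩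
  · intro i h2i hil
    have hsub : T.submatrix (Fin.castLE (le_trans hil (Nat.sub_le l 1)))
        (Fin.castLE (le_trans hil (Nat.sub_le l 1))) = Mmat i := by
      ext a b
      have hal : a.val < i := a.isLt
      have hbl : b.val < i := b.isLt
      rw [Matrix.submatrix_apply, hT]
      simp only [Mmat, Fin.ext_iff, Fin.coe_castLE]
      split_ifs <;> first | rfl | (exfalso; omega)
    rw [hsub]
    exact detMmat i (by omega)
  · intro hpd
    have := hpd.det_pos
    rw [hdet] at this
    exact lt_irrefl 0 this
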